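/- Let y be a real number with 0 ≤ y ≤ 1. Then for all real numbers θ and ϑ, y · log(1 + exp(−θ)) ≤ y · log(1 + exp(−ϑ)) − y · (exp(−ϑ)/(1 + exp(−ϑ))) · (θ − ϑ) + (1/8)(θ − ϑ)², with equality when θ = ϑ. -/

import Mathlib

open Real

noncomputable def sig (x : ℝ) : ℝ := (Real.exp x + 1)⁻¹

lemma sig_hasDeriv (x : ℝ) :
    HasDerivAt sig (-(Real.exp x) / (Real.exp x + 1) ^ 2) x := by
  have h1 : HasDerivAt (fun x : ℝ => Real.exp x + 1) (Real.exp x) x :=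
    (Real.hasDerivAt_exp x).add_const 1
  have hne : Real.exp x + 1 ≠ 0 := by positivity
  exact h1.inv hne

lemma sig_deriv_bound (x : ℝ) : ‖deriv sig x‖ ≤ 1 / 4 := by
  rw [(sig_hasDeriv x).deriv]
  rw [Real.norm_eq_abs]
  have he : 0 < Real.exp x := Real.exp_pos x
  rw [abs_div, abs_neg, abs_of_pos he, abs_of_pos (by positivity : (0:ℝ) < (Real.exp x + 1)^2)]
  rw [div_le_iff₀ (by positivity)]
  nlinarith [sq_nonneg (Real.exp x - 1)]

lemma sig_lip (a b : ℝ) : ‖sig b - sig a‖ ≤ 1 / 4 * ‖b - a‖ := by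
  have hdiff : ∀ x ∈ (Set.univ : Set ℝ), DifferentiableAt ℝ sig x := fun x _ =>
    (sig_hasDeriv x).differentiableAt
  have := Convex.norm_image_sub_le_of_norm_deriv_le hdiff
    (fun x _ => sig_deriv_bound x) convex_univ (Set.mem_univ a) (Set.mem_univ b)
  simpa using this

lemma logloss_hasDeriv (x : ℝ) :
    HasDerivAt (fun t => Real.log (1 + Real.exp (-t))) (-(sig x)) x := by
  have h1 : HasDerivAt (fun t : ℝ => 1 + Real.exp (-t)) (-Real.exp (-x)) x := by
    have := ((Real.hasDerivAt_exp (-x)).comp x ((hasDerivAt_id x).neg))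
    simpa using this.const_add 1
  have hne : 1 + Real.exp (-x) ≠ 0 := by positivity
  have := h1.log hne
  convert this using 1
  rw [sig, Real.exp_neg]
  field_simp

lemma core (θ ϑ : ℝ) :
    Real.log (1 + Real.exp (-θ)) ≤
      Real.log (1 + Real.exp (-ϑ)) - sig ϑ * (θ - ϑ) + (1 / 8) * (θ - ϑ) ^ 2 := by
  set f : ℝ → ℝ := fun t => Real.log (1 + Real.exp (-t)) with hf
  set g : ℝ → ℝ := fun x => f ϑ - sig ϑ * (x - ϑ) + (1 / 8) * (x - ϑ) ^ 2 - f x with hg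
  have hg' : ∀ x, HasDerivAt g (sig x - sig ϑ + (1 / 4) * (x - ϑ)) x := by
    intro x
    have h1 : HasDerivAt (fun x : ℝ => f ϑ - sig ϑ * (x - ϑ) + (1 / 8) * (x - ϑ) ^ 2)
        (-(sig ϑ) + (1 / 8) * (2 * (x - ϑ))) x := by
      have ha : HasDerivAt (fun x : ℝ => x - ϑ) 1 x := (hasDerivAt_id x).sub_const ϑ
      have hb := (ha.pow 2).const_mul (1/8 : ℝ)
      have hc := (ha.const_mul (sig ϑ)).const_sub (f ϑ)
      have := hc.add hb
      refine this.congr_deriv ?_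
      ring
    have := h1.sub (logloss_hasDeriv x)
    refine this.congr_deriv ?_
    ring
  have hgϑ : g ϑ = 0 := by simp [hg]
  have key : 0 ≤ g θ := by
    rcases le_total ϑ θ with h | h
    · have hmono : MonotoneOn g (Set.Ici ϑ) := by
        apply monotoneOn_of_deriv_nonneg (convex_Ici ϑ)
        · exact fun x _ => ((hg' x).continuousAt).continuousWithinAt
        · intro x hx
          exact ((hg' x).differentiableAt).differentiableWithinAt
        · intro x hx
          rw [(hg' x).deriv]
          rw [interior_Ici] at hx
          have hx' : ϑ ≤ x := le_of_lt hx
          have := sig_lip ϑ x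
          rw [Real.norm_eq_abs, Real.norm_eq_abs, abs_sub_le_iff] at this
          have h2 : |x - ϑ| = x - ϑ := abs_of_nonneg (by linarith)
          rw [h2] at this
          linarith [this.2]
      have := hmono (Set.self_mem_Ici) (Set.mem_Ici.mpr h) h
      linarith [hgϑ ▸ this]
    · have hanti : AntitoneOn g (Set.Iic ϑ) := by
        apply antitoneOn_of_deriv_nonpos (convex_Iic ϑ)
        · exact fun x _ => ((hg' x).continuousAt).continuousWithinAt
        · intro x hx
          exact ((hg' x).differentiableAt).differentiableWithinAt
        · intro x hx
          rw [(hg' x).deriv]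
          rw [interior_Iic] at hx
          have hx' : x ≤ ϑ := le_of_lt hx
          have := sig_lip ϑ x
          rw [Real.norm_eq_abs, Real.norm_eq_abs, abs_sub_le_iff] at this
          have h2 : |x - ϑ| = ϑ - x := by rw [abs_sub_comm]; exact abs_of_nonneg (by linarith)
          rw [h2] at this
          linarith [this.1]
      have := hanti (Set.mem_Iic.mpr h) (Set.self_mem_Iic) h
      linarith [hgϑ ▸ this]
  simp only [hg, hf] at key
  linarith

theorem stmt_9 (y : ℝ) (hy0 : 0 ≤ y) (hy1 : y ≤ 1) (θ ϑ : ℝ) :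
    y * Real.log (1 + Real.exp (-θ)) ≤
      y * Real.log (1 + Real.exp (-ϑ)) -
        y * (Real.exp (-ϑ) / (1 + Real.exp (-ϑ))) * (θ - ϑ) +
        (1 / 8) * (θ - ϑ) ^ 2 ∧
    (θ = ϑ →
      y * Real.log (1 + Real.exp (-θ)) =
        y * Real.log (1 + Real.exp (-ϑ)) -
          y * (Real.exp (-ϑ) / (1 + Real.exp (-ϑ))) * (θ - ϑ) +
          (1 / 8) * (θ - ϑ) ^ 2) := by
  have hsig : Real.exp (-ϑ) / (1 + Real.exp (-ϑ)) = sig ϑ := by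
    rw [sig, Real.exp_neg]
    have := Real.exp_pos ϑ
    field_simp
  constructor
  · have h := core θ ϑ
    have h2 := mul_le_mul_of_nonneg_left h hy0
    rw [hsig]
    nlinarith [sq_nonneg (θ - ϑ)]
  · intro h
    subst h
    ring
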